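/- arXiv:1709.03634 — 2 statements merged into one kernel-verified Lean document; each statement's English description precedes it below -/
import Mathlib

section
/- Let α > 0 and 0 ≤ μ < 1 with μ ≤ α, and let ψ ∈ C¹([a,b]) be increasing with ψ' ≠ 0. Then the ψ-fractional integral I_{a+}^{α;ψ} maps the weighted space C_{μ;ψ}[a,b] boundedly into C[a,b]. -/
open MeasureTheory Real Set

noncomputable def psiInt (a α : ℝ) (ψ f : ℝ → ℝ) (x : ℝ) : ℝ :=
  (1 / Real.Gamma α) * ∫ t in a..x, deriv ψ t * (ψ x - ψ t) ^ (α - 1) * f t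

open Filter Topology in
private lemma betaInt (α μ : ℝ) (hα : 0 < α) (hμ0 : 0 ≤ μ) (hμ1 : μ < 1) :
    IntegrableOn (fun r : ℝ => r ^ (-μ) * (1 - r) ^ (α - 1)) (Ioo (0:ℝ) 1) := by
  have h1 : IntegrableOn (fun r : ℝ => r ^ (-μ) * (1 - r) ^ (α - 1)) (Ioc (0:ℝ) 2⁻¹) := by
    set c₁ : ℝ := max ((2:ℝ) ^ (1 - α)) 1 with hc₁
    have hint : IntegrableOn (fun r : ℝ => c₁ * r ^ (-μ)) (Ioc (0:ℝ) 2⁻¹) := by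
      have := (intervalIntegral.intervalIntegrable_rpow' (a := 0) (b := 2⁻¹)
        (r := -μ) (by linarith)).def'
      rw [uIoc_of_le (by norm_num)] at this
      exact this.const_mul c₁
    refine Integrable.mono' hint ?_ ?_
    · refine (ContinuousOn.mul ?_ ?_).aestronglyMeasurable measurableSet_Ioc
      · exact ContinuousOn.rpow_const continuousOn_id fun r hr => Or.inl (ne_of_gt hr.1)
      · exact ContinuousOn.rpow_const (by fun_prop) fun r hr => Or.inl (by nlinarith [hr.2])
    · rw [ae_restrict_iff' measurableSet_Ioc]
      filter_upwards with r hr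
      have h0r : 0 < r := hr.1
      have hr2 : r ≤ 2⁻¹ := hr.2
      have h1r : (2:ℝ)⁻¹ ≤ 1 - r := by linarith
      have hb : (1 - r) ^ (α - 1) ≤ c₁ := by
        rcases le_or_gt 0 (α - 1) with h | h
        · exact le_trans (Real.rpow_le_one (by linarith) (by linarith) h) (le_max_right _ _)
        · refine le_trans ?_ (le_max_left _ _)
          have := Real.rpow_le_rpow_of_nonpos (by norm_num : (0:ℝ) < 2⁻¹) h1r h.le
          calc (1 - r) ^ (α - 1) ≤ ((2:ℝ)⁻¹) ^ (α - 1) := this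
            _ = (2:ℝ) ^ (1 - α) := by
                rw [Real.inv_rpow (by norm_num), ← Real.rpow_neg (by norm_num), neg_sub]
      have : ‖r ^ (-μ) * (1 - r) ^ (α - 1)‖ = r ^ (-μ) * (1 - r) ^ (α - 1) := by
        rw [Real.norm_eq_abs, abs_of_nonneg]
        positivity
      rw [this, mul_comm c₁ _]
      exact mul_le_mul_of_nonneg_left hb (by positivity)
  have h2 : IntegrableOn (fun r : ℝ => r ^ (-μ) * (1 - r) ^ (α - 1)) (Ioo (2⁻¹:ℝ) 1) := by
    set c₂ : ℝ := (2:ℝ) ^ μ with hc₂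
    have hint : IntegrableOn (fun r : ℝ => c₂ * (1 - r) ^ (α - 1)) (Ioo (2⁻¹:ℝ) 1) := by
      have h0 : IntervalIntegrable (fun x : ℝ => x ^ (α - 1)) volume 0 2⁻¹ :=
        intervalIntegral.intervalIntegrable_rpow' (by linarith)
      have h1 := (h0.comp_sub_left 1).def'
      norm_num at h1
      rw [← integrableOn_Ioc_iff_integrableOn_Ioo]
      have h2 := h1.const_mul c₂
      have he : Ioc ((1:ℝ)/2) 1 = Ioc (2⁻¹:ℝ) 1 := by norm_num
      rwa [he] at h2
    refine Integrable.mono' hint ?_ ?_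
    · refine (ContinuousOn.mul ?_ ?_).aestronglyMeasurable measurableSet_Ioo
      · exact ContinuousOn.rpow_const continuousOn_id fun r hr => Or.inl (by nlinarith [hr.1])
      · exact ContinuousOn.rpow_const (by fun_prop) fun r hr => Or.inl (by nlinarith [hr.2])
    · rw [ae_restrict_iff' measurableSet_Ioo]
      filter_upwards with r hr
      have h0r : (0:ℝ) < 2⁻¹ := by norm_num
      have hb : r ^ (-μ) ≤ c₂ := by
        have := Real.rpow_le_rpow_of_nonpos h0r hr.1.le (by linarith : -μ ≤ 0)
        calc r ^ (-μ) ≤ ((2:ℝ)⁻¹) ^ (-μ) := this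
          _ = (2:ℝ) ^ μ := by
              rw [Real.inv_rpow (by norm_num), ← Real.rpow_neg (by norm_num), neg_neg]
      have hnn : 0 ≤ (1 - r) ^ (α - 1) := Real.rpow_nonneg (by linarith [hr.2]) _
      have : ‖r ^ (-μ) * (1 - r) ^ (α - 1)‖ = r ^ (-μ) * (1 - r) ^ (α - 1) := by
        rw [Real.norm_eq_abs, abs_of_nonneg]
        have : (0:ℝ) ≤ r ^ (-μ) := Real.rpow_nonneg (by linarith [hr.1]) _
        positivity
      rw [this]
      exact mul_le_mul_of_nonneg_right hb hnn
  exact (h1.union h2).mono_set (by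
    rintro r ⟨h0, h1⟩
    rcases le_or_gt r 2⁻¹ with h | h
    · exact Or.inl ⟨h0, h⟩
    · exact Or.inr ⟨h, h1⟩)

open Filter Topology in
private lemma inv_spec (a b : ℝ) (ψ : ℝ → ℝ) (hab : a < b) (hc : ContinuousOn ψ (Icc a b))
    (hmono : StrictMonoOn ψ (Icc a b)) :
    ∃ φ : ℝ → ℝ, (∀ t ∈ Icc a b, φ (ψ t) = t) ∧
      (∀ u ∈ Icc (ψ a) (ψ b), φ u ∈ Icc a b ∧ ψ (φ u) = u) ∧
      ContinuousOn φ (Icc (ψ a) (ψ b)) := by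
  have hab' : a ≤ b := hab.le
  have hma : a ∈ Icc a b := left_mem_Icc.2 hab'
  have hmb : b ∈ Icc a b := right_mem_Icc.2 hab'
  have himg : ψ '' Icc a b = Icc (ψ a) (ψ b) := by
    apply Subset.antisymm
    · rintro _ ⟨t, ht, rfl⟩
      exact ⟨hmono.monotoneOn hma ht ht.1, hmono.monotoneOn ht hmb ht.2⟩
    · exact intermediate_value_Icc hab' hc
  set φ := Function.invFunOn ψ (Icc a b) with hφ
  have hleftinv : ∀ t ∈ Icc a b, φ (ψ t) = t := fun t ht => hmono.injOn.leftInvOn_invFunOn ht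
  have hsub : ∀ u ∈ Icc (ψ a) (ψ b), ∃ t ∈ Icc a b, ψ t = u := by
    intro u hu
    have : u ∈ ψ '' Icc a b := himg ▸ hu
    exact this
  have hmem : ∀ u ∈ Icc (ψ a) (ψ b), φ u ∈ Icc a b ∧ ψ (φ u) = u := fun u hu =>
    ⟨Function.invFunOn_mem (f := ψ) (hsub u hu), Function.invFunOn_eq (f := ψ) (hsub u hu)⟩
  refine ⟨φ, hleftinv, hmem, ?_⟩
  have hAB : ψ a < ψ b := hmono hma hmb hab
  have hφA : φ (ψ a) = a := hleftinv a hma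
  have hφB : φ (ψ b) = b := hleftinv b hmb
  have φmono : StrictMonoOn φ (Icc (ψ a) (ψ b)) := by
    intro u hu v hv huv
    have h1 := hmem u hu
    have h2 := hmem v hv
    refine (hmono.lt_iff_lt h1.1 h2.1).1 ?_
    rw [h1.2, h2.2]; exact huv
  intro u hu
  have hright : u < ψ b → ContinuousWithinAt φ (Ici u) u := by
    intro huB
    refine φmono.continuousWithinAt_right_of_exists_between
      (Icc_mem_nhdsGE_of_mem ⟨hu.1, huB⟩) ?_
    intro c hc'
    have hφub : φ u < b := by
      have := φmono hu (right_mem_Icc.2 hAB.le) huB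
      rwa [hφB] at this
    set d' : ℝ := min c b with hd'
    have hφud' : φ u < d' := lt_min hc' hφub
    have hd'mem : d' ∈ Icc a b := ⟨le_trans (hmem u hu).1.1 hφud'.le, min_le_right _ _⟩
    refine ⟨ψ d', ?_, ?_⟩
    · rw [← himg]; exact ⟨d', hd'mem, rfl⟩
    · rw [hleftinv d' hd'mem]
      exact ⟨hφud', min_le_left _ _⟩
  have hleft : ψ a < u → ContinuousWithinAt φ (Iic u) u := by
    intro hAu
    refine φmono.continuousWithinAt_left_of_exists_between
      (Icc_mem_nhdsLE_of_mem ⟨hAu, hu.2⟩) ?_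
    intro c hc'
    have hφua : a < φ u := by
      have := φmono (left_mem_Icc.2 hAB.le) hu hAu
      rwa [hφA] at this
    set d' : ℝ := max c a with hd'
    have hφud' : d' < φ u := max_lt hc' hφua
    have hd'mem : d' ∈ Icc a b := ⟨le_max_right _ _, le_trans hφud'.le (hmem u hu).1.2⟩
    refine ⟨ψ d', ?_, ?_⟩
    · rw [← himg]; exact ⟨d', hd'mem, rfl⟩
    · rw [hleftinv d' hd'mem]
      exact ⟨le_max_left _ _, hφud'⟩
  have h1 : ContinuousWithinAt φ (Icc (ψ a) (ψ b) ∩ Ici u) u := by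
    rcases lt_or_ge u (ψ b) with h | h
    · exact (hright h).mono inter_subset_right
    · refine continuousWithinAt_singleton.mono ?_
      intro v hv
      have : v = u := le_antisymm (le_trans hv.1.2 (le_antisymm hu.2 h ▸ le_refl u)) hv.2
      simp [this]
  have h2 : ContinuousWithinAt φ (Icc (ψ a) (ψ b) ∩ Iic u) u := by
    rcases lt_or_ge (ψ a) u with h | h
    · exact (hleft h).mono inter_subset_right
    · refine continuousWithinAt_singleton.mono ?_
      intro v hv
      have : v = u := le_antisymm hv.2 (le_trans (le_antisymm h hu.1).le hv.1.1)
      simp [this]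
  refine (h1.union h2).mono ?_
  intro v hv
  rcases le_total u v with h | h
  · exact Or.inl ⟨hv, h⟩
  · exact Or.inr ⟨hv, h⟩

open Filter Topology in
-- derivative of a strictly monotone function is nonneg at interior points
private lemma deriv_nn (a b t : ℝ) (ψ : ℝ → ℝ) (hmono : StrictMonoOn ψ (Icc a b))
    (ht : t ∈ Ioo a b) (hdiff : DifferentiableAt ℝ ψ t) : 0 ≤ deriv ψ t := by
  have hmem : Icc a b ∈ 𝓝 t := Icc_mem_nhds ht.1 ht.2
  have hd : Filter.Tendsto (slope ψ t) (𝓝[≠] t) (𝓝 (deriv ψ t)) :=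
    hasDerivAt_iff_tendsto_slope.1 hdiff.hasDerivAt
  refine ge_of_tendsto hd ?_
  filter_upwards [nhdsWithin_le_nhds hmem, self_mem_nhdsWithin] with y hy hyne
  have htmem : t ∈ Icc a b := ⟨ht.1.le, ht.2.le⟩
  rcases lt_or_gt_of_ne (hyne : y ≠ t) with h | h
  · have : ψ y ≤ ψ t := hmono.monotoneOn hy htmem h.le
    rw [slope_def_field]
    exact div_nonneg_iff.2 (Or.inr ⟨by linarith, by linarith⟩)
  · have : ψ t ≤ ψ y := hmono.monotoneOn htmem hy h.le
    rw [slope_def_field]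
    exact div_nonneg (by linarith) (by linarith)

open Filter Topology in
private lemma key_identity (a b α μ x : ℝ) (ψ f φ : ℝ → ℝ) (hab : a < b) (hα : 0 < α) (hμ0 : 0 ≤ μ)
    (hψ : ContDiffOn ℝ 1 ψ (Set.Icc a b)) (hmono : StrictMonoOn ψ (Set.Icc a b))
    (hφ1 : ∀ t ∈ Icc a b, φ (ψ t) = t)
    (hφ2 : ∀ u ∈ Icc (ψ a) (ψ b), φ u ∈ Icc a b ∧ ψ (φ u) = u)
    (hx : x ∈ Ioc a b) :
    ∫ t in a..x, deriv ψ t * (ψ x - ψ t) ^ (α - 1) * f t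
      = (ψ x - ψ a) ^ (α - μ) *
        ∫ r in Ioo (0:ℝ) 1, r ^ (-μ) * (1 - r) ^ (α - 1) *
          ((ψ (φ ((ψ x - ψ a) * r + ψ a)) - ψ a) ^ μ * f (φ ((ψ x - ψ a) * r + ψ a))) := by
  have hax : a < x := hx.1
  have hxb : x ≤ b := hx.2
  have hxm : x ∈ Icc a b := ⟨hax.le, hxb⟩
  have ham : a ∈ Icc a b := left_mem_Icc.2 hab.le
  have hbm : b ∈ Icc a b := right_mem_Icc.2 hab.le
  set A := ψ a with hA
  set s := ψ x - ψ a with hs_def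
  have hs : 0 < s := sub_pos.2 (hmono ham hxm hax)
  have hsub : Icc a x ⊆ Icc a b := Icc_subset_Icc le_rfl hxb
  have hsub' : Ioo a x ⊆ Icc a b := fun t ht => hsub ⟨ht.1.le, ht.2.le⟩
  set g : ℝ → ℝ := fun u => f (φ u) with hg
  set h : ℝ → ℝ := fun u => (ψ x - u) ^ (α - 1) * g u with hh
  -- change of variables u = ψ t
  have himg : ψ '' Ioo a x = Ioo A (ψ x) := by
    apply Subset.antisymm
    · rintro _ ⟨t, ht, rfl⟩
      exact ⟨hmono ham (hsub' ht) ht.1, hmono (hsub' ht) hxm ht.2⟩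
    · intro u hu
      obtain ⟨t, ht, htu⟩ := intermediate_value_Icc hax.le (hψ.continuousOn.mono hsub)
        ⟨hu.1.le, hu.2.le⟩
      refine ⟨t, ⟨?_, ?_⟩, htu⟩
      · rcases eq_or_lt_of_le ht.1 with h | h
        · exfalso
          have h2 : A < u := hu.1
          rw [hA, h, htu] at h2
          exact lt_irrefl u h2
        · exact h
      · rcases eq_or_lt_of_le ht.2 with h | h
        · exfalso
          have h2 : u < ψ x := hu.2
          rw [← h, htu] at h2
          exact lt_irrefl u h2
        · exact h
  have hderiv : ∀ t ∈ Ioo a x, HasDerivWithinAt ψ (deriv ψ t) (Ioo a x) t := by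
    intro t ht
    have hmem : Icc a b ∈ 𝓝 t := Icc_mem_nhds (ht.1.trans_le' le_rfl) (lt_of_lt_of_le ht.2 hxb)
    have : DifferentiableAt ℝ ψ t :=
      ((hψ.differentiableOn one_ne_zero) t (hsub' ht)).differentiableAt hmem
    exact this.hasDerivAt.hasDerivWithinAt
  have hdiffat : ∀ t ∈ Ioo a x, DifferentiableAt ℝ ψ t := by
    intro t ht
    have hmem : Icc a b ∈ 𝓝 t := Icc_mem_nhds ht.1 (lt_of_lt_of_le ht.2 hxb)
    exact ((hψ.differentiableOn one_ne_zero) t (hsub' ht)).differentiableAt hmem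
  have hcov := integral_image_eq_integral_abs_deriv_smul measurableSet_Ioo hderiv
    (hmono.injOn.mono hsub') h
  rw [himg] at hcov
  have step1 : ∫ t in a..x, deriv ψ t * (ψ x - ψ t) ^ (α - 1) * f t
      = ∫ u in Ioo A (ψ x), h u := by
    rw [intervalIntegral.integral_of_le hax.le, integral_Ioc_eq_integral_Ioo, hcov]
    apply setIntegral_congr_fun measurableSet_Ioo
    intro t ht
    have h1 : |deriv ψ t| = deriv ψ t := abs_of_nonneg
      (deriv_nn a b t ψ hmono ⟨ht.1, lt_of_lt_of_le ht.2 hxb⟩ (hdiffat t ht))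
    have h2 : φ (ψ t) = t := hφ1 t (hsub' ht)
    simp only [hh, hg, smul_eq_mul, h1, h2]
    ring
  -- linear substitution u = s * r + A
  have step2 : ∫ u in Ioo A (ψ x), h u = s * ∫ r in (0:ℝ)..1, h (s * r + A) := by
    have hAx : A < ψ x := by rw [hA]; exact hmono ham hxm hax
    have hlin := intervalIntegral.integral_comp_mul_add (a := (0:ℝ)) (b := 1) (f := h)
      (c := s) hs.ne' A
    have he1 : s * 0 + A = A := by ring
    have he2 : s * 1 + A = ψ x := by rw [hs_def]; ring
    rw [he1, he2] at hlin
    rw [← integral_Ioc_eq_integral_Ioo, ← intervalIntegral.integral_of_le hAx.le, hlin,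
      smul_eq_mul, ← mul_assoc, mul_inv_cancel₀ hs.ne', one_mul]
  -- pointwise identification on (0,1)
  have step3 : ∫ r in (0:ℝ)..1, h (s * r + A)
      = (s ^ (α - 1) * s ^ (-μ)) * ∫ r in Ioo (0:ℝ) 1, r ^ (-μ) * (1 - r) ^ (α - 1) *
          ((ψ (φ (s * r + A)) - A) ^ μ * f (φ (s * r + A))) := by
    rw [intervalIntegral.integral_of_le (by norm_num : (0:ℝ) ≤ 1), integral_Ioc_eq_integral_Ioo,
      ← integral_const_mul]
    apply setIntegral_congr_fun measurableSet_Ioo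
    intro r hr
    have hr0 : 0 < r := hr.1
    have hr1 : 0 < 1 - r := by linarith [hr.2]
    set u : ℝ := s * r + A with hu_def
    have huA : A < u := by nlinarith
    have hux : u < ψ x := by nlinarith
    have huB : u ∈ Icc A (ψ b) := ⟨huA.le, le_trans hux.le (hmono.monotoneOn hxm hbm hxb)⟩
    have hval : ψ (φ u) = u := (hφ2 u huB).2
    simp only [hh, hg]
    rw [hval]
    have e0 : ψ x - u = s * (1 - r) := by rw [hu_def, hs_def]; ring
    have e1 : u - A = s * r := by rw [hu_def]; ring
    rw [e0, e1, Real.mul_rpow hs.le hr1.le, Real.mul_rpow hs.le hr0.le]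
    have e3 : s ^ (-μ) * s ^ μ = 1 := by rw [← Real.rpow_add hs]; simp
    have e4 : r ^ (-μ) * r ^ μ = 1 := by rw [← Real.rpow_add hr0]; simp
    linear_combination (-(s ^ (α-1) * (1-r) ^ (α-1) * f (φ u) * (r ^ (-μ) * r ^ μ))) * e3 +
      (-(s ^ (α-1) * (1-r) ^ (α-1) * f (φ u))) * e4
  rw [step1, step2, step3]
  have hpow : s * (s ^ (α - 1) * s ^ (-μ)) = s ^ (α - μ) := by
    nth_rewrite 1 [← Real.rpow_one s]
    rw [← Real.rpow_add hs, ← Real.rpow_add hs]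
    congr 1; ring
  rw [← mul_assoc, hpow]

open Filter Topology in
private lemma H_cont (A B' α μ : ℝ) (W : ℝ → ℝ) (hα : 0 < α) (hμ0 : 0 ≤ μ) (hμ1 : μ < 1)
    (hAB : A ≤ B') (hw : ContinuousOn W (Icc A B')) :
    ContinuousOn (fun s => ∫ r in Ioo (0:ℝ) 1, r ^ (-μ) * (1 - r) ^ (α - 1) * W (s * r + A))
      (Icc 0 (B' - A)) := by
  obtain ⟨K₀, hK₀⟩ := isCompact_Icc.exists_bound_of_continuousOn hw
  have hmaps : ∀ s ∈ Icc (0:ℝ) (B' - A), ∀ r ∈ Ioo (0:ℝ) 1, s * r + A ∈ Icc A B' := by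
    intro s hs r hr
    constructor
    · nlinarith [hs.1, hr.1.le, hr.2.le]
    · nlinarith [hs.1, hs.2, hr.1.le, hr.2.le]
  apply continuousOn_of_dominated (bound := fun r => |K₀| * (r ^ (-μ) * (1 - r) ^ (α - 1)))
  · intro s hs
    apply ContinuousOn.aestronglyMeasurable _ measurableSet_Ioo
    refine ContinuousOn.mul (ContinuousOn.mul ?_ ?_) ?_
    · exact ContinuousOn.rpow_const continuousOn_id fun r hr => Or.inl (ne_of_gt hr.1)
    · exact ContinuousOn.rpow_const (by fun_prop) fun r hr => Or.inl (by nlinarith [hr.2])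
    · exact hw.comp (by fun_prop) (fun r hr => hmaps s hs r hr)
  · intro s hs
    rw [ae_restrict_iff' measurableSet_Ioo]
    filter_upwards with r hr
    have h1 : (0:ℝ) ≤ r ^ (-μ) := Real.rpow_nonneg hr.1.le _
    have h2 : (0:ℝ) ≤ (1 - r) ^ (α - 1) := Real.rpow_nonneg (by linarith [hr.2]) _
    have h3 : ‖W (s * r + A)‖ ≤ |K₀| := le_trans (hK₀ _ (hmaps s hs r hr)) (le_abs_self K₀)
    calc ‖r ^ (-μ) * (1 - r) ^ (α - 1) * W (s * r + A)‖
        = r ^ (-μ) * (1 - r) ^ (α - 1) * ‖W (s * r + A)‖ := by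
          rw [norm_mul, norm_mul, Real.norm_of_nonneg h1, Real.norm_of_nonneg h2]
      _ ≤ r ^ (-μ) * (1 - r) ^ (α - 1) * |K₀| := by
          exact mul_le_mul_of_nonneg_left h3 (by positivity)
      _ = |K₀| * (r ^ (-μ) * (1 - r) ^ (α - 1)) := by ring
  · exact (betaInt α μ hα hμ0 hμ1).const_mul _
  · rw [ae_restrict_iff' measurableSet_Ioo]
    filter_upwards with r hr
    refine continuousOn_const.mul (hw.comp (by fun_prop) ?_)
    intro s hs
    exact hmaps s hs r hr

open Filter Topology in
private lemma H_bound (A B' α μ K s : ℝ) (W : ℝ → ℝ) (hα : 0 < α) (hμ0 : 0 ≤ μ) (hμ1 : μ < 1)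
    (hs : s ∈ Icc 0 (B' - A)) (hw : ∀ u ∈ Icc A B', |W u| ≤ K) :
    |∫ r in Ioo (0:ℝ) 1, r ^ (-μ) * (1 - r) ^ (α - 1) * W (s * r + A)|
      ≤ K * ∫ r in Ioo (0:ℝ) 1, r ^ (-μ) * (1 - r) ^ (α - 1) := by
  have hmaps : ∀ r ∈ Ioo (0:ℝ) 1, s * r + A ∈ Icc A B' := by
    intro r hr
    constructor
    · nlinarith [hs.1, hr.1.le, hr.2.le]
    · nlinarith [hs.1, hs.2, hr.1.le, hr.2.le]
  rw [← Real.norm_eq_abs]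
  calc ‖∫ r in Ioo (0:ℝ) 1, r ^ (-μ) * (1 - r) ^ (α - 1) * W (s * r + A)‖
      ≤ ∫ r in Ioo (0:ℝ) 1, K * (r ^ (-μ) * (1 - r) ^ (α - 1)) := by
        apply norm_integral_le_of_norm_le ((betaInt α μ hα hμ0 hμ1).const_mul K)
        rw [ae_restrict_iff' measurableSet_Ioo]
        filter_upwards with r hr
        have h1 : (0:ℝ) ≤ r ^ (-μ) := Real.rpow_nonneg hr.1.le _
        have h2 : (0:ℝ) ≤ (1 - r) ^ (α - 1) := Real.rpow_nonneg (by linarith [hr.2]) _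
        calc ‖r ^ (-μ) * (1 - r) ^ (α - 1) * W (s * r + A)‖
            = r ^ (-μ) * (1 - r) ^ (α - 1) * |W (s * r + A)| := by
              rw [norm_mul, norm_mul, Real.norm_of_nonneg h1, Real.norm_of_nonneg h2,
                Real.norm_eq_abs]
          _ ≤ r ^ (-μ) * (1 - r) ^ (α - 1) * K :=
              mul_le_mul_of_nonneg_left (hw _ (hmaps r hr)) (by positivity)
          _ = K * (r ^ (-μ) * (1 - r) ^ (α - 1)) := by ring
    _ = K * ∫ r in Ioo (0:ℝ) 1, r ^ (-μ) * (1 - r) ^ (α - 1) := integral_const_mul _ _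

theorem stmt9 (a b α μ : ℝ) (ψ : ℝ → ℝ) (hab : a < b) (hα : 0 < α)
    (hμ0 : 0 ≤ μ) (hμ1 : μ < 1) (hμα : μ ≤ α)
    (hψ : ContDiffOn ℝ 1 ψ (Set.Icc a b)) (hmono : StrictMonoOn ψ (Set.Icc a b))
    (hψ' : ∀ x ∈ Set.Icc a b, deriv ψ x ≠ 0) :
    ∃ C : ℝ, 0 ≤ C ∧ ∀ f : ℝ → ℝ,
      ContinuousOn (fun t => (ψ t - ψ a) ^ μ * f t) (Set.Icc a b) →
      (ContinuousOn (psiInt a α ψ f) (Set.Icc a b) ∧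
        ∀ K : ℝ, (∀ t ∈ Set.Icc a b, |(ψ t - ψ a) ^ μ * f t| ≤ K) →
          ∀ x ∈ Set.Icc a b, |psiInt a α ψ f x| ≤ C * K) := by
  have ham : a ∈ Icc a b := left_mem_Icc.2 hab.le
  have hbm : b ∈ Icc a b := right_mem_Icc.2 hab.le
  have hAB : ψ a ≤ ψ b := (hmono ham hbm hab).le
  have hΓ : 0 < Real.Gamma α := Real.Gamma_pos_of_pos hα
  have hαμ : 0 ≤ α - μ := by linarith
  set Cβ : ℝ := ∫ r in Ioo (0:ℝ) 1, r ^ (-μ) * (1 - r) ^ (α - 1) with hCβ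
  have hCβ0 : 0 ≤ Cβ := by
    apply setIntegral_nonneg measurableSet_Ioo
    intro r hr
    have h1 : (0:ℝ) ≤ r ^ (-μ) := Real.rpow_nonneg hr.1.le _
    have h2 : (0:ℝ) ≤ (1 - r) ^ (α - 1) := Real.rpow_nonneg (by linarith [hr.2]) _
    positivity
  set M : ℝ := max 1 ((ψ b - ψ a) ^ (α - μ)) with hM
  have hM0 : 0 < M := lt_of_lt_of_le one_pos (le_max_left _ _)
  refine ⟨(1 / Real.Gamma α) * M * Cβ, by positivity, ?_⟩
  intro f hf
  obtain ⟨φ, hφ1, hφ2, hφc⟩ := inv_spec a b ψ hab hψ.continuousOn hmono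
  set W : ℝ → ℝ := fun u => (ψ (φ u) - ψ a) ^ μ * f (φ u) with hW
  have hWc : ContinuousOn W (Icc (ψ a) (ψ b)) := by
    exact hf.comp hφc (fun u hu => (hφ2 u hu).1)
  set S : ℝ → ℝ := fun x => ψ x - ψ a with hS
  have hSmaps : ∀ x ∈ Icc a b, S x ∈ Icc 0 (ψ b - ψ a) := by
    intro x hx
    exact ⟨sub_nonneg.2 (hmono.monotoneOn ham hx hx.1), by
      have := hmono.monotoneOn hx hbm hx.2; simp only [hS]; linarith⟩
  set H : ℝ → ℝ := fun s => ∫ r in Ioo (0:ℝ) 1, r ^ (-μ) * (1 - r) ^ (α - 1) * W (s * r + ψ a)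
    with hH
  set G : ℝ → ℝ := fun x => (1 / Real.Gamma α) * ((S x) ^ (α - μ) * H (S x)) with hG
  have hEq : EqOn (psiInt a α ψ f) G (Icc a b) := by
    intro x hx
    rcases eq_or_lt_of_le hx.1 with h | h
    · -- x = a
      have hGa : G a = 0 := by
        rcases lt_or_eq_of_le hμα with hlt | heq
        · simp only [hG, hS, sub_self]
          rw [Real.zero_rpow (ne_of_gt (by linarith : (0:ℝ) < α - μ))]
          ring
        · have hμpos : 0 < μ := heq ▸ hα
          have hH0 : H 0 = 0 := by
            simp only [hH]
            have : ∀ r : ℝ, W ((0:ℝ) * r + ψ a) = 0 := by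
              intro r
              simp only [hW, zero_mul, zero_add, hφ1 a ham, sub_self,
                Real.zero_rpow (ne_of_gt hμpos), zero_mul]
            simp only [this, mul_zero, integral_zero]
          simp only [hG, hS, sub_self, hH0, mul_zero]
      rw [← h, hGa]
      simp [psiInt, intervalIntegral.integral_same]
    · -- a < x
      have hkey := key_identity a b α μ x ψ f φ hab hα hμ0 hψ hmono hφ1 hφ2 ⟨h, hx.2⟩
      simp only [psiInt, hG, hS, hH, hW]
      rw [hkey]
  have hGc : ContinuousOn G (Icc a b) := by
    have hψc : ContinuousOn ψ (Icc a b) := hψ.continuousOn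
    have hSc : ContinuousOn S (Icc a b) := hψc.sub continuousOn_const
    refine continuousOn_const.mul (ContinuousOn.mul ?_ ?_)
    · exact hSc.rpow_const fun x hx => Or.inr hαμ
    · exact (H_cont (ψ a) (ψ b) α μ W hα hμ0 hμ1 hAB hWc).comp hSc hSmaps
  constructor
  · exact hGc.congr hEq
  · intro K hK x hx
    have hK0 : 0 ≤ K := le_trans (abs_nonneg _) (hK a ham)
    have hWb : ∀ u ∈ Icc (ψ a) (ψ b), |W u| ≤ K := fun u hu => hK _ (hφ2 u hu).1
    have hSx := hSmaps x hx
    have hSpow : (S x) ^ (α - μ) ≤ M := by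
      rcases le_or_gt (S x) 1 with h | h
      · exact le_trans (Real.rpow_le_one hSx.1 h hαμ) (le_max_left _ _)
      · refine le_trans (Real.rpow_le_rpow hSx.1 (by linarith [hSx.2]) hαμ) (le_max_right _ _)
    have hHb : |H (S x)| ≤ K * Cβ :=
      H_bound (ψ a) (ψ b) α μ K (S x) W hα hμ0 hμ1 hSx hWb
    have habs : |psiInt a α ψ f x| = (1 / Real.Gamma α) * ((S x) ^ (α - μ) * |H (S x)|) := by
      rw [hEq hx]
      simp only [hG]
      rw [abs_mul, abs_mul, abs_of_nonneg (by positivity : (0:ℝ) ≤ 1 / Real.Gamma α),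
        abs_of_nonneg (Real.rpow_nonneg hSx.1 _)]
    rw [habs]
    calc (1 / Real.Gamma α) * ((S x) ^ (α - μ) * |H (S x)|)
        ≤ (1 / Real.Gamma α) * (M * (K * Cβ)) := by
          apply mul_le_mul_of_nonneg_left _ (by positivity)
          exact mul_le_mul hSpow hHb (abs_nonneg _) (le_of_lt hM0)
      _ = (1 / Real.Gamma α) * M * Cβ * K := by ring
end

section
/- Let 0 < α < 1, 0 ≤ β ≤ 1, γ = α + β(1 − α), and let ψ ∈ C¹([a,b]) be increasing with ψ' ≠ 0. If f ∈ C_{1−γ;ψ}[a,b] is bounded by M in the weighted norm, then ‖I_{a+}^{α;ψ} f‖_{C_{1−γ;ψ}[a,x]} ≤ M · (Γ(γ)/Γ(γ+α)) · (ψ(x) − ψ(a))^α for x ∈ (a,b]. -/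
open MeasureTheory Real Set

lemma rbEval {p q c : ℝ} (hp : 0 < p) (hq : 0 < q) (hc : 0 < c) :
    ∫ u in (0:ℝ)..c, u ^ (p-1) * (c - u) ^ (q-1)
      = c ^ (p+q-1) * (Real.Gamma p * Real.Gamma q / Real.Gamma (p+q)) := by
  have h1 : (∫ u in (0:ℝ)..c, ((u ^ (p-1) * (c - u) ^ (q-1) : ℝ) : ℂ))
      = ∫ u in (0:ℝ)..c, (u:ℂ) ^ ((p:ℂ)-1) * ((c:ℂ) - u) ^ ((q:ℂ)-1) := by
    rw [intervalIntegral.integral_of_le hc.le, intervalIntegral.integral_of_le hc.le]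
    refine setIntegral_congr_fun measurableSet_Ioc fun u hu => ?_
    have h0u : (0:ℝ) ≤ u := le_of_lt hu.1
    have huc : (0:ℝ) ≤ c - u := sub_nonneg.2 hu.2
    push_cast
    rw [Complex.ofReal_cpow h0u, Complex.ofReal_cpow huc]
    push_cast
    ring
  have hB : Complex.betaIntegral (p:ℂ) (q:ℂ)
      = ((Real.Gamma p * Real.Gamma q / Real.Gamma (p+q) : ℝ) : ℂ) := by
    have h3 := Complex.Gamma_mul_Gamma_eq_betaIntegral (s := (p:ℂ)) (t := (q:ℂ))
      (by simpa using hp) (by simpa using hq)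
    have hpq : ((p:ℂ) + (q:ℂ)) = ((p+q : ℝ) : ℂ) := by push_cast; ring
    have hne : Real.Gamma (p+q) ≠ 0 := (Real.Gamma_pos_of_pos (by positivity)).ne'
    rw [hpq, Complex.Gamma_ofReal, Complex.Gamma_ofReal, Complex.Gamma_ofReal] at h3
    have hne' : ((Real.Gamma (p+q) : ℝ) : ℂ) ≠ 0 := by exact_mod_cast hne
    rw [eq_comm, Complex.ofReal_div, Complex.ofReal_mul, div_eq_iff hne', h3]
    ring
  have h2 := Complex.betaIntegral_scaled (p:ℂ) (q:ℂ) hc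
  rw [intervalIntegral.integral_ofReal] at h1
  have hcp : ((c ^ (p+q-1) : ℝ) : ℂ) = (c:ℂ) ^ ((p:ℂ) + (q:ℂ) - 1) := by
    rw [Complex.ofReal_cpow hc.le]; push_cast; ring_nf
  have : ((∫ u in (0:ℝ)..c, u ^ (p-1) * (c - u) ^ (q-1) : ℝ) : ℂ)
      = ((c ^ (p+q-1) * (Real.Gamma p * Real.Gamma q / Real.Gamma (p+q)) : ℝ) : ℂ) := by
    rw [h1, h2, hB, Complex.ofReal_mul, hcp]
  exact_mod_cast this

lemma rbInt01 {p q : ℝ} (hp : 0 < p) (hq : 0 < q) :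
    IntervalIntegrable (fun u : ℝ => u ^ (p-1) * (1 - u) ^ (q-1)) volume 0 1 := by
  have K := Complex.betaIntegral_convergent (u := (p:ℂ)) (v := (q:ℂ))
    (by simpa using hp) (by simpa using hq)
  rw [intervalIntegrable_iff] at K ⊢
  refine K.re.congr ((ae_restrict_iff' measurableSet_uIoc).2 (ae_of_all _ fun x hx => ?_))
  rw [Set.uIoc_of_le (zero_le_one : (0:ℝ) ≤ 1)] at hx
  have h0 : (0:ℝ) ≤ x := hx.1.le
  have h1 : (0:ℝ) ≤ 1 - x := sub_nonneg.2 hx.2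
  have : ((x:ℂ) ^ ((p:ℂ)-1) * (1 - (x:ℂ)) ^ ((q:ℂ)-1))
      = ((x ^ (p-1) * (1 - x) ^ (q-1) : ℝ) : ℂ) := by
    push_cast
    rw [Complex.ofReal_cpow h0, Complex.ofReal_cpow h1]
    push_cast
    ring
  simp [this]

lemma rbInt {p q c : ℝ} (hp : 0 < p) (hq : 0 < q) (hc : 0 < c) :
    IntervalIntegrable (fun u : ℝ => u ^ (p-1) * (c - u) ^ (q-1)) volume 0 c := by
  have h2 := (rbInt01 hp hq).comp_mul_left (c := c⁻¹) enorm_ne_top enorm_ne_top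
  rw [zero_div, one_div, inv_inv] at h2
  have h3 := h2.const_mul (c ^ (p+q-2))
  rw [intervalIntegrable_iff] at h3 ⊢
  refine h3.congr ((ae_restrict_iff' measurableSet_uIoc).2 (ae_of_all _ fun u hu => ?_))
  rw [Set.uIoc_of_le hc.le] at hu
  have hu0 : (0:ℝ) ≤ u := hu.1.le
  have huc : (0:ℝ) ≤ c - u := sub_nonneg.2 hu.2
  have e1 : c⁻¹ * u = u / c := by ring
  have e2 : 1 - u / c = (c - u) / c := by field_simp
  have hsplit : c ^ (p+q-2) = c ^ (p-1) * c ^ (q-1) := by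
    rw [← Real.rpow_add hc]; ring_nf
  simp only []
  rw [e1, e2, Real.div_rpow hu0 hc.le, Real.div_rpow huc hc.le, hsplit]
  have h4 := (Real.rpow_pos_of_pos hc (p-1)).ne'
  have h5 := (Real.rpow_pos_of_pos hc (q-1)).ne'
  field_simp

theorem stmt10 (a b α β γ M : ℝ) (ψ f : ℝ → ℝ) (hab : a < b)
    (hα : 0 < α) (hα1 : α < 1) (hβ0 : 0 ≤ β) (hβ1 : β ≤ 1)
    (hγ : γ = α + β * (1 - α))
    (hψ : ContDiffOn ℝ 1 ψ (Set.Icc a b)) (hmono : StrictMonoOn ψ (Set.Icc a b))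
    (hψ' : ∀ x ∈ Set.Icc a b, deriv ψ x ≠ 0)
    (hf : ContinuousOn (fun t => (ψ t - ψ a) ^ (1 - γ) * f t) (Set.Icc a b))
    (hM : ∀ t ∈ Set.Icc a b, |(ψ t - ψ a) ^ (1 - γ) * f t| ≤ M) :
    ∀ x ∈ Set.Ioc a b, ∀ t ∈ Set.Icc a x,
      |(ψ t - ψ a) ^ (1 - γ) * psiInt a α ψ f t| ≤
        M * (Real.Gamma γ / Real.Gamma (γ + α)) * (ψ x - ψ a) ^ α := by
  have hγpos : 0 < γ := by nlinarith
  have hγ1 : γ ≤ 1 := by nlinarith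
  have hM0 : 0 ≤ M := le_trans (abs_nonneg _) (hM a ⟨le_rfl, hab.le⟩)
  have hΓα := Real.Gamma_pos_of_pos hα
  have hΓγ := Real.Gamma_pos_of_pos hγpos
  have hΓs := Real.Gamma_pos_of_pos (by positivity : (0:ℝ) < γ + α)
  have hdiff : ∀ s ∈ Set.Ioo a b, HasDerivAt ψ (deriv ψ s) s := fun s hs =>
    ((hψ.differentiableOn one_ne_zero).differentiableAt (Icc_mem_nhds hs.1 hs.2)).hasDerivAt
  have hderivpos : ∀ s ∈ Set.Ioo a b, 0 < deriv ψ s := by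
    intro s hs
    have hne := hψ' s (Set.Ioo_subset_Icc_self hs)
    have hd := hdiff s hs
    rw [hasDerivAt_iff_tendsto_slope] at hd
    have h2 : Filter.Tendsto (slope ψ s) (nhdsWithin s (Set.Ioi s)) (nhds (deriv ψ s)) :=
      hd.mono_left (nhdsWithin_mono s fun y hy => hy.ne')
    have hub : 0 ≤ deriv ψ s := by
      refine ge_of_tendsto h2 ?_
      filter_upwards [Ioo_mem_nhdsGT hs.2] with y hy
      have hsy : ψ s ≤ ψ y :=
        (hmono ⟨hs.1.le, hs.2.le⟩ ⟨(hs.1.trans hy.1).le, hy.2.le⟩ hy.1).le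
      rw [slope_def_field]
      exact div_nonneg (sub_nonneg.2 hsy) (sub_nonneg.2 hy.1.le)
    exact lt_of_le_of_ne hub (Ne.symm hne)
  intro x hx t ht
  have htb : t ≤ b := ht.2.trans hx.2
  have hax : ψ a < ψ x := hmono ⟨le_rfl, hab.le⟩ ⟨hx.1.le, hx.2⟩ hx.1
  have hRHS0 : 0 ≤ M * (Real.Gamma γ / Real.Gamma (γ + α)) * (ψ x - ψ a) ^ α :=
    mul_nonneg (mul_nonneg hM0 (div_nonneg hΓγ.le hΓs.le))
      (Real.rpow_nonneg (sub_nonneg.2 hax.le) α)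
  rcases eq_or_lt_of_le ht.1 with rfl | hat
  · have : psiInt a α ψ f a = 0 := by
      simp [psiInt, intervalIntegral.integral_same]
    rw [this, mul_zero, abs_zero]
    exact hRHS0
  · -- main case a < t
    have hAT : ψ a < ψ t := hmono ⟨le_rfl, hab.le⟩ ⟨ht.1, htb⟩ hat
    have hc : 0 < ψ t - ψ a := sub_pos.2 hAT
    have hsub : Set.Ioo a t ⊆ Set.Ioo a b := Set.Ioo_subset_Ioo_right htb
    have hder : ∀ s ∈ Set.Ioo a t, HasDerivWithinAt ψ (deriv ψ s) (Set.Ioo a t) s :=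
      fun s hs => (hdiff s (hsub hs)).hasDerivWithinAt
    have hinj : Set.InjOn ψ (Set.Ioo a t) :=
      (hmono.mono fun s hs => ⟨(hsub hs).1.le, (hsub hs).2.le⟩).injOn
    have himg : ψ '' Set.Ioo a t = Set.Ioo (ψ a) (ψ t) := by
      apply Set.Subset.antisymm
      · rintro _ ⟨s, hs, rfl⟩
        exact ⟨hmono ⟨le_rfl, hab.le⟩ ⟨hs.1.le, (hs.2.trans_le htb).le⟩ hs.1,
          hmono ⟨hs.1.le, (hs.2.trans_le htb).le⟩ ⟨ht.1, htb⟩ hs.2⟩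
      · exact intermediate_value_Ioo ht.1 (hψ.continuousOn.mono (Set.Icc_subset_Icc le_rfl htb))
    set g : ℝ → ℝ := fun u => (u - ψ a) ^ (γ - 1) * (ψ t - u) ^ (α - 1) with hg
    have hCOV := integral_image_eq_integral_abs_deriv_smul measurableSet_Ioo hder hinj g
    rw [himg] at hCOV
    have hCOV2 : ∫ u in Set.Ioo (ψ a) (ψ t), g u = ∫ s in Set.Ioo a t, deriv ψ s * g (ψ s) := by
      rw [hCOV]
      refine setIntegral_congr_fun measurableSet_Ioo fun s hs => ?_
      simp only [smul_eq_mul]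
      rw [abs_of_pos (hderivpos s (hsub hs))]
    have hfun : (fun u : ℝ => (u - ψ a) ^ (γ - 1) * ((ψ t - ψ a) - (u - ψ a)) ^ (α - 1)) = g := by
      funext u
      have : ψ t - ψ a - (u - ψ a) = ψ t - u := by ring
      rw [hg, this]
    have hshift : IntervalIntegrable g volume (ψ a) (ψ t) := by
      have h0 := (rbInt hγpos hα hc).comp_sub_right (ψ a)
      rw [zero_add, sub_add_cancel] at h0
      rwa [hfun] at h0
    have hIoo : IntegrableOn g (Set.Ioo (ψ a) (ψ t)) volume := by
      have := intervalIntegrable_iff.1 hshift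
      rw [Set.uIoc_of_le hAT.le] at this
      exact this.mono_set Set.Ioo_subset_Ioc_self
    have hGioo : IntegrableOn (fun s => deriv ψ s * g (ψ s)) (Set.Ioo a t) volume := by
      have h1 := (integrableOn_image_iff_integrableOn_abs_deriv_smul measurableSet_Ioo hder
        hinj g).1 (by rw [himg]; exact hIoo)
      refine (h1.congr_fun ?_ measurableSet_Ioo)
      intro s hs
      simp only [smul_eq_mul]
      rw [abs_of_pos (hderivpos s (hsub hs))]
    have hG : IntervalIntegrable (fun s => deriv ψ s * g (ψ s)) volume a t := by
      rw [intervalIntegrable_iff, Set.uIoc_of_le hat.le]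
      exact hGioo.congr_set_ae Ioo_ae_eq_Ioc.symm
    have hval : ∫ s in a..t, deriv ψ s * g (ψ s)
        = (ψ t - ψ a) ^ (γ + α - 1) * (Real.Gamma γ * Real.Gamma α / Real.Gamma (γ + α)) := by
      rw [intervalIntegral.integral_of_le hat.le, integral_Ioc_eq_integral_Ioo, ← hCOV2,
        ← integral_Ioc_eq_integral_Ioo, ← intervalIntegral.integral_of_le hAT.le]
      have e := intervalIntegral.integral_comp_sub_right (a := ψ a) (b := ψ t)
        (fun v => v ^ (γ - 1) * ((ψ t - ψ a) - v) ^ (α - 1)) (ψ a)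
      rw [sub_self, hfun] at e
      rw [e, rbEval hγpos hα hc]
    have hbound : ∀ s ∈ Set.Ioc a t,
        |deriv ψ s * (ψ t - ψ s) ^ (α - 1) * f s| ≤ M * (deriv ψ s * g (ψ s)) := by
      intro s hs
      rcases eq_or_lt_of_le hs.2 with rfl | hst
      · simp [hg, Real.zero_rpow (by intro h; exact absurd (by linarith : α = 1) hα1.ne : α - 1 ≠ 0)]
      · have hsa : a < s := hs.1
        have hsb : s < b := hst.trans_le htb
        have hψs_pos : 0 < deriv ψ s := hderivpos s ⟨hsa, hsb⟩
        have h1 : ψ a < ψ s := hmono ⟨le_rfl, hab.le⟩ ⟨hsa.le, hsb.le⟩ hsa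
        have h2 : ψ s < ψ t := hmono ⟨hsa.le, hsb.le⟩ ⟨ht.1, htb⟩ hst
        have hfs : |f s| ≤ M * (ψ s - ψ a) ^ (γ - 1) := by
          have hMs := hM s ⟨hsa.le, hsb.le⟩
          have hw : (0:ℝ) < (ψ s - ψ a) ^ (1 - γ) := Real.rpow_pos_of_pos (sub_pos.2 h1) _
          have hinv : ((ψ s - ψ a) ^ (1 - γ))⁻¹ = (ψ s - ψ a) ^ (γ - 1) := by
            rw [← Real.rpow_neg (sub_pos.2 h1).le, neg_sub]
          rw [← hinv, mul_comm]
          calc |f s| = ((ψ s - ψ a) ^ (1 - γ))⁻¹ * ((ψ s - ψ a) ^ (1 - γ) * |f s|) := by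
                field_simp
            _ ≤ ((ψ s - ψ a) ^ (1 - γ))⁻¹ * M := by
                refine mul_le_mul_of_nonneg_left ?_ (inv_nonneg.2 hw.le)
                rw [abs_mul, abs_of_pos hw] at hMs
                exact hMs
        have hpow2 : (0:ℝ) < (ψ t - ψ s) ^ (α - 1) := Real.rpow_pos_of_pos (sub_pos.2 h2) _
        calc |deriv ψ s * (ψ t - ψ s) ^ (α - 1) * f s|
            = deriv ψ s * (ψ t - ψ s) ^ (α - 1) * |f s| := by
              rw [abs_mul, abs_mul, abs_of_pos hψs_pos, abs_of_pos hpow2]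
          _ ≤ deriv ψ s * (ψ t - ψ s) ^ (α - 1) * (M * (ψ s - ψ a) ^ (γ - 1)) := by
              exact mul_le_mul_of_nonneg_left hfs (by positivity)
          _ = M * (deriv ψ s * g (ψ s)) := by rw [hg]; ring
    have hIle : |∫ s in a..t, deriv ψ s * (ψ t - ψ s) ^ (α - 1) * f s|
        ≤ |∫ s in a..t, M * (deriv ψ s * g (ψ s))| := by
      have hnm := intervalIntegral.norm_integral_le_of_norm_le (μ := volume) (a := a) (b := t)
        (f := fun s => deriv ψ s * (ψ t - ψ s) ^ (α - 1) * f s)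
        (g := fun s => M * (deriv ψ s * g (ψ s))) hat.le
        (ae_of_all _ fun s hs => by
          rw [Real.norm_eq_abs]
          exact hbound s hs)
        (hG.const_mul M)
      simpa [Real.norm_eq_abs] using hnm.trans (le_abs_self _)
    have hGval : ∫ s in a..t, M * (deriv ψ s * g (ψ s))
        = M * ((ψ t - ψ a) ^ (γ + α - 1) * (Real.Gamma γ * Real.Gamma α / Real.Gamma (γ + α))) := by
      rw [intervalIntegral.integral_const_mul, hval]
    have hGnn : (0:ℝ) ≤ M * ((ψ t - ψ a) ^ (γ + α - 1)
        * (Real.Gamma γ * Real.Gamma α / Real.Gamma (γ + α))) := by positivity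
    have hIle2 : |∫ s in a..t, deriv ψ s * (ψ t - ψ s) ^ (α - 1) * f s|
        ≤ M * ((ψ t - ψ a) ^ (γ + α - 1) * (Real.Gamma γ * Real.Gamma α / Real.Gamma (γ + α))) := by
      calc |∫ s in a..t, deriv ψ s * (ψ t - ψ s) ^ (α - 1) * f s|
          ≤ |∫ s in a..t, M * (deriv ψ s * g (ψ s))| := hIle
        _ = M * ((ψ t - ψ a) ^ (γ + α - 1)
            * (Real.Gamma γ * Real.Gamma α / Real.Gamma (γ + α))) := by
            rw [hGval, abs_of_nonneg hGnn]
    -- final assembly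
    have hw : (0:ℝ) ≤ (ψ t - ψ a) ^ (1 - γ) := Real.rpow_nonneg hc.le _
    have key : |(ψ t - ψ a) ^ (1 - γ) * psiInt a α ψ f t|
        ≤ M * (Real.Gamma γ / Real.Gamma (γ + α)) * (ψ t - ψ a) ^ α := by
      rw [psiInt, abs_mul, abs_mul, abs_of_nonneg hw,
        abs_of_nonneg (by positivity : (0:ℝ) ≤ 1 / Real.Gamma α)]
      calc (ψ t - ψ a) ^ (1 - γ) * (1 / Real.Gamma α
            * |∫ s in a..t, deriv ψ s * (ψ t - ψ s) ^ (α - 1) * f s|)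
          ≤ (ψ t - ψ a) ^ (1 - γ) * (1 / Real.Gamma α
            * (M * ((ψ t - ψ a) ^ (γ + α - 1)
              * (Real.Gamma γ * Real.Gamma α / Real.Gamma (γ + α))))) := by
            exact mul_le_mul_of_nonneg_left
              (mul_le_mul_of_nonneg_left hIle2 (by positivity)) hw
        _ = M * (Real.Gamma γ / Real.Gamma (γ + α)) * (ψ t - ψ a) ^ α := by
            rw [show (ψ t - ψ a) ^ α = (ψ t - ψ a) ^ (1 - γ) * (ψ t - ψ a) ^ (γ + α - 1) by
              rw [← Real.rpow_add hc]; ring_nf]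
            field_simp
    refine key.trans ?_
    have hψtx : ψ t ≤ ψ x := hmono.monotoneOn ⟨ht.1, htb⟩ ⟨hx.1.le, hx.2⟩ ht.2
    exact mul_le_mul_of_nonneg_left
      (Real.rpow_le_rpow hc.le (sub_le_sub_right hψtx _) hα.le)
      (mul_nonneg hM0 (div_nonneg hΓγ.le hΓs.le))
end
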